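/- For 1 ≤ k ≤ n, p(k, n) = p(n - k + 1, n), and consequently p(k, n) ≥ p(k+1, n+1). -/

import Mathlib

open Finset
open scoped Classical

/-- Absolute rank (1-based) of the `j`-th candidate when the arrival order is
given by the permutation `σ` : the `j`-th candidate interviewed has rank `σ j + 1`. -/
def absRank {n : ℕ} (σ : Equiv.Perm (Fin n)) (j : Fin n) : ℕ := (σ j : ℕ) + 1

/-- Relative rank (1-based) of the `j`-th candidate among the first `j` candidates. -/
def relRank {n : ℕ} (σ : Equiv.Perm (Fin n)) (j : Fin n) : ℕ :=
  (Finset.univ.filter fun i : Fin n => i ≤ j ∧ σ i ≤ σ j).card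

/-- A stopping rule adapted to the sequence of relative ranks: the decision to stop at
stage `τ σ` depends only on the relative ranks observed up to that stage. -/
def IsStoppingRule {n : ℕ} (τ : Equiv.Perm (Fin n) → Fin n) : Prop :=
  ∀ σ σ' : Equiv.Perm (Fin n), (∀ i, i ≤ τ σ → relRank σ i = relRank σ' i) → τ σ' = τ σ

/-- The probability (w.r.t. the uniform distribution on arrival orders) that the
stopping rule `τ` selects a candidate whose absolute rank lies in `Γ`. -/
noncomputable def selectProb (n : ℕ) (Γ : Finset ℕ) (τ : Equiv.Perm (Fin n) → Fin n) : ℝ :=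
  ((Finset.univ.filter fun σ : Equiv.Perm (Fin n) => absRank σ (τ σ) ∈ Γ).card : ℝ) /
    (Nat.factorial n : ℝ)

/-- `p(Γ, n)`: the maximal probability of selecting a candidate with absolute rank in `Γ`. -/
noncomputable def pSet (n : ℕ) (Γ : Finset ℕ) : ℝ :=
  sSup {x : ℝ | ∃ τ : Equiv.Perm (Fin n) → Fin n, IsStoppingRule τ ∧ x = selectProb n Γ τ}

/-- `p(k, n)`: the maximal probability of selecting the `k`-th best of `n` candidates. -/
noncomputable def pRank (n k : ℕ) : ℝ := pSet n {k}

-- ==== symmetry part ====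

lemma relRank_rev_add {n : ℕ} (σ : Equiv.Perm (Fin n)) (j : Fin n) :
    relRank (σ.trans Fin.revPerm) j + relRank σ j = j.val + 2 := by
  classical
  have key := Finset.card_union_add_card_inter
      (Finset.univ.filter fun i : Fin n => i ≤ j ∧ (σ.trans Fin.revPerm) i ≤ (σ.trans Fin.revPerm) j)
      (Finset.univ.filter fun i : Fin n => i ≤ j ∧ σ i ≤ σ j)
  rw [← Finset.filter_or, ← Finset.filter_and] at key
  have hu : (Finset.univ.filter fun i : Fin n =>
      (i ≤ j ∧ (σ.trans Fin.revPerm) i ≤ (σ.trans Fin.revPerm) j) ∨ (i ≤ j ∧ σ i ≤ σ j))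
      = Finset.Iic j := by
    ext i
    simp only [Finset.mem_filter, Finset.mem_univ, true_and, Finset.mem_Iic,
      Equiv.trans_apply, Fin.revPerm_apply, Fin.rev_le_rev]
    constructor
    · rintro (⟨h, -⟩ | ⟨h, -⟩) <;> exact h
    · intro h
      rcases le_total (σ i) (σ j) with hle | hle
      · exact Or.inr ⟨h, hle⟩
      · exact Or.inl ⟨h, hle⟩
  have hi : (Finset.univ.filter fun i : Fin n =>
      (i ≤ j ∧ (σ.trans Fin.revPerm) i ≤ (σ.trans Fin.revPerm) j) ∧ (i ≤ j ∧ σ i ≤ σ j))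
      = {j} := by
    ext i
    simp only [Finset.mem_filter, Finset.mem_univ, true_and, Finset.mem_singleton,
      Equiv.trans_apply, Fin.revPerm_apply, Fin.rev_le_rev]
    constructor
    · rintro ⟨⟨-, h1⟩, ⟨-, h2⟩⟩
      exact σ.injective (le_antisymm h2 h1)
    · rintro rfl
      exact ⟨⟨le_refl _, le_refl _⟩, ⟨le_refl _, le_refl _⟩⟩
  rw [hu, hi, Fin.card_Iic, Finset.card_singleton] at key
  unfold relRank
  omega

noncomputable def revRule {n : ℕ} (τ : Equiv.Perm (Fin n) → Fin n) :
    Equiv.Perm (Fin n) → Fin n := fun σ => τ (σ.trans Fin.revPerm)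

lemma trans_rev_trans_rev {n : ℕ} (σ : Equiv.Perm (Fin n)) :
    (σ.trans Fin.revPerm).trans Fin.revPerm = σ := by
  ext i
  simp [Fin.rev_rev]

lemma revRule_revRule {n : ℕ} (τ : Equiv.Perm (Fin n) → Fin n) :
    revRule (revRule τ) = τ := by
  funext σ
  unfold revRule
  rw [trans_rev_trans_rev]

lemma isStoppingRule_revRule {n : ℕ} {τ : Equiv.Perm (Fin n) → Fin n}
    (h : IsStoppingRule τ) : IsStoppingRule (revRule τ) := by
  intro σ σ' hag
  exact h (σ.trans Fin.revPerm) (σ'.trans Fin.revPerm) (fun i hi => by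
    have h1 := relRank_rev_add σ i
    have h2 := relRank_rev_add σ' i
    have h3 := hag i hi
    omega)

lemma selectProb_revRule {n k : ℕ} (hk1 : 1 ≤ k) (hkn : k ≤ n)
    (τ : Equiv.Perm (Fin n) → Fin n) :
    selectProb n {k} (revRule τ) = selectProb n {n - k + 1} τ := by
  unfold selectProb
  congr 2
  refine Finset.card_bij' (fun σ _ => σ.trans Fin.revPerm) (fun σ _ => σ.trans Fin.revPerm)
    ?_ ?_ (fun σ _ => trans_rev_trans_rev σ) (fun σ _ => trans_rev_trans_rev σ)
  · intro σ hσ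
    simp only [Finset.mem_filter, Finset.mem_univ, true_and, Finset.mem_singleton] at hσ ⊢
    unfold revRule at hσ
    unfold absRank at hσ ⊢
    have hlt : ((σ.trans Fin.revPerm) (τ (σ.trans Fin.revPerm)) : ℕ) =
        n - 1 - (σ (τ (σ.trans Fin.revPerm)) : ℕ) := by
      simp [Fin.val_rev]
      omega
    have hb : (σ (τ (σ.trans Fin.revPerm)) : ℕ) < n := Fin.is_lt _
    omega
  · intro ρ hρ
    simp only [Finset.mem_filter, Finset.mem_univ, true_and, Finset.mem_singleton] at hρ ⊢
    unfold revRule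
    rw [trans_rev_trans_rev]
    unfold absRank at hρ ⊢
    have hlt : (((ρ.trans Fin.revPerm)) (τ ρ) : ℕ) = n - 1 - (ρ (τ ρ) : ℕ) := by
      simp [Fin.val_rev]
      omega
    have hb : (ρ (τ ρ) : ℕ) < n := Fin.is_lt _
    omega

lemma pRank_rev {n k : ℕ} (hk1 : 1 ≤ k) (hkn : k ≤ n) : pRank n k = pRank n (n - k + 1) := by
  unfold pRank pSet
  congr 1
  ext x
  constructor
  · rintro ⟨τ, hτ, rfl⟩
    refine ⟨revRule τ, isStoppingRule_revRule hτ, ?_⟩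
    rw [← selectProb_revRule hk1 hkn (revRule τ), revRule_revRule]
  · rintro ⟨τ, hτ, rfl⟩
    exact ⟨revRule τ, isStoppingRule_revRule hτ, (selectProb_revRule hk1 hkn τ).symm⟩

-- ==== monotonicity part ====

noncomputable def ins {n : ℕ} (m : Fin (n+1)) (σ : Equiv.Perm (Fin n)) :
    Equiv.Perm (Fin (n+1)) :=
  ((finSuccEquiv' m).trans (Equiv.optionCongr σ)).trans (finSuccEquiv' (Fin.last n)).symm

lemma ins_self {n : ℕ} (m : Fin (n+1)) (σ : Equiv.Perm (Fin n)) :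
    ins m σ m = Fin.last n := by
  simp [ins, finSuccEquiv'_at]

lemma ins_succAbove {n : ℕ} (m : Fin (n+1)) (σ : Equiv.Perm (Fin n)) (j : Fin n) :
    ins m σ (m.succAbove j) = (σ j).castSucc := by
  simp [ins, finSuccEquiv'_succAbove, finSuccEquiv'_symm_some, Fin.succAbove_last]

lemma ins_injective {n : ℕ} :
    Function.Injective (fun p : Fin (n+1) × Equiv.Perm (Fin n) => ins p.1 p.2) := by
  rintro ⟨m, σ⟩ ⟨m', σ'⟩ h
  simp only at h
  have hm : m = m' := by
    by_contra hne
    obtain ⟨j, hj⟩ := Fin.exists_succAbove_eq hne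
    have h1 : ins m' σ' m = Fin.last n := by rw [← h]; exact ins_self m σ
    rw [← hj, ins_succAbove] at h1
    exact absurd h1 (Fin.castSucc_lt_last _).ne
  subst hm
  have hσ : σ = σ' := by
    apply Equiv.ext
    intro j
    apply Fin.castSucc_injective
    rw [← ins_succAbove m σ j, h, ins_succAbove]
  rw [hσ]

lemma ins_bijective {n : ℕ} :
    Function.Bijective (fun p : Fin (n+1) × Equiv.Perm (Fin n) => ins p.1 p.2) := by
  rw [Fintype.bijective_iff_injective_and_card]
  refine ⟨ins_injective, ?_⟩
  simp [Fintype.card_perm, Nat.factorial_succ]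

lemma relRank_ins_self {n : ℕ} (m : Fin (n+1)) (σ : Equiv.Perm (Fin n)) :
    relRank (ins m σ) m = m.val + 1 := by
  unfold relRank
  have h : (Finset.univ.filter fun i : Fin (n+1) => i ≤ m ∧ ins m σ i ≤ ins m σ m)
      = Finset.Iic m := by
    ext i
    simp [ins_self, Fin.le_last]
  rw [h, Fin.card_Iic]

lemma relRank_ins_succAbove {n : ℕ} (m : Fin (n+1)) (σ : Equiv.Perm (Fin n)) (j : Fin n) :
    relRank (ins m σ) (m.succAbove j) = relRank σ j := by
  unfold relRank
  symm
  apply Finset.card_bij (fun j' _ => m.succAbove j')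
  · intro a ha
    simp only [Finset.mem_filter, Finset.mem_univ, true_and] at ha ⊢
    rw [ins_succAbove, ins_succAbove]
    exact ⟨Fin.succAbove_le_succAbove_iff.mpr ha.1, Fin.castSucc_le_castSucc_iff.mpr ha.2⟩
  · intro a _ b _ h
    exact Fin.succAbove_right_injective h
  · intro i hi
    simp only [Finset.mem_filter, Finset.mem_univ, true_and] at hi
    have hne : i ≠ m := by
      rintro rfl
      rw [ins_self, ins_succAbove] at hi
      exact absurd hi.2 (Fin.castSucc_lt_last _).not_ge
    obtain ⟨j', hj'⟩ := Fin.exists_succAbove_eq hne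
    refine ⟨j', ?_, hj'⟩
    simp only [Finset.mem_filter, Finset.mem_univ, true_and]
    rw [← hj', ins_succAbove, ins_succAbove] at hi
    exact ⟨Fin.succAbove_le_succAbove_iff.mp hi.1, Fin.castSucc_le_castSucc_iff.mp hi.2⟩

noncomputable def shrink {n : ℕ} (hn : 0 < n) (τ : Equiv.Perm (Fin (n+1)) → Fin (n+1))
    (m : Fin (n+1)) (σ : Equiv.Perm (Fin n)) : Fin n :=
  (finSuccEquiv' m (τ (ins m σ))).getD ⟨m.val - 1, by have := m.isLt; omega⟩

lemma shrink_of_ne {n : ℕ} (hn : 0 < n) (τ : Equiv.Perm (Fin (n+1)) → Fin (n+1))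
    (m : Fin (n+1)) (σ : Equiv.Perm (Fin n)) (j₀ : Fin n)
    (h : m.succAbove j₀ = τ (ins m σ)) : shrink hn τ m σ = j₀ := by
  unfold shrink
  rw [← h, finSuccEquiv'_succAbove]
  rfl

lemma val_le_succAbove {n : ℕ} (m : Fin (n+1)) (j : Fin n) :
    (j : ℕ) ≤ (m.succAbove j : ℕ) := by
  rcases lt_or_ge j.castSucc m with h | h
  · rw [Fin.succAbove_of_castSucc_lt m j h, Fin.coe_castSucc]
  · rw [Fin.succAbove_of_le_castSucc m j h, Fin.val_succ]
    omega

lemma isStoppingRule_shrink {n : ℕ} (hn : 0 < n) {τ : Equiv.Perm (Fin (n+1)) → Fin (n+1)}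
    (hτ : IsStoppingRule τ) (m : Fin (n+1)) : IsStoppingRule (shrink hn τ m) := by
  intro σ σ' hag
  have key : τ (ins m σ') = τ (ins m σ) := by
    apply hτ
    intro s hs
    rcases eq_or_ne s m with rfl | hne
    · rw [relRank_ins_self, relRank_ins_self]
    · obtain ⟨j, hj⟩ := Fin.exists_succAbove_eq hne
      rw [← hj] at hs ⊢
      rw [relRank_ins_succAbove, relRank_ins_succAbove]
      apply hag
      rcases eq_or_ne (τ (ins m σ)) m with ht | ht
      · -- stopped at the fake candidate; fallback value
        rw [ht] at hs
        have hlt' : m.succAbove j < m :=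
          lt_of_le_of_ne hs (by rw [hj]; exact hne)
        have hlt : (m.succAbove j : ℕ) < (m : ℕ) := hlt'
        have hjv : (j : ℕ) ≤ (m.succAbove j : ℕ) := val_le_succAbove m j
        have hsh : shrink hn τ m σ = ⟨m.val - 1, by have := m.isLt; omega⟩ := by
          unfold shrink
          simp only [ht, finSuccEquiv'_at, Option.getD_none]
        rw [hsh]
        simp only [Fin.le_def]
        omega
      · obtain ⟨j₀, hj₀⟩ := Fin.exists_succAbove_eq ht
        rw [shrink_of_ne hn τ m σ j₀ hj₀]
        rw [← hj₀] at hs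
        exact Fin.succAbove_le_succAbove_iff.mp hs
  have h1 : shrink hn τ m σ' = (finSuccEquiv' m (τ (ins m σ))).getD
      ⟨m.val - 1, by have := m.isLt; omega⟩ := by
    unfold shrink
    rw [key]
  rw [h1]
  rfl

lemma shrink_success {n k : ℕ} (hn : 0 < n) (hk : k ≤ n)
    (τ : Equiv.Perm (Fin (n+1)) → Fin (n+1)) (m : Fin (n+1)) (σ : Equiv.Perm (Fin n))
    (h : absRank (ins m σ) (τ (ins m σ)) = k) : absRank σ (shrink hn τ m σ) = k := by
  have hne : τ (ins m σ) ≠ m := by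
    intro ht
    rw [ht] at h
    unfold absRank at h
    rw [ins_self] at h
    simp [Fin.val_last] at h
    omega
  obtain ⟨j₀, hj₀⟩ := Fin.exists_succAbove_eq hne
  rw [shrink_of_ne hn τ m σ j₀ hj₀]
  rw [← hj₀] at h
  unfold absRank at h ⊢
  rw [ins_succAbove] at h
  simpa using h

lemma count_split (n : ℕ) (P : Equiv.Perm (Fin (n+1)) → Prop) [DecidablePred P] :
    (Finset.univ.filter P).card =
      ∑ m : Fin (n+1), (Finset.univ.filter fun σ : Equiv.Perm (Fin n) => P (ins m σ)).card := by
  classical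
  rw [Finset.card_eq_sum_card_fiberwise
    (f := fun ρ : Equiv.Perm (Fin (n+1)) => ρ⁻¹ (Fin.last n)) (t := Finset.univ)
    (fun x _ => Finset.mem_univ _)]
  apply Finset.sum_congr rfl
  intro m _
  symm
  apply Finset.card_bij (fun σ _ => ins m σ)
  · intro σ hσ
    simp only [Finset.mem_filter, Finset.mem_univ, true_and] at hσ ⊢
    refine ⟨hσ, ?_⟩
    rw [← ins_self m σ]
    exact Equiv.symm_apply_apply _ _
  · intro a _ b _ h
    have := ins_injective (a₁ := (m, a)) (a₂ := (m, b)) h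
    exact congrArg Prod.snd this
  · intro ρ hρ
    simp only [Finset.mem_filter, Finset.mem_univ, true_and] at hρ
    obtain ⟨⟨m', σ⟩, hms⟩ := ins_bijective.2 ρ
    simp only at hms
    have hm' : m' = m := by
      have h1 : ρ m' = Fin.last n := by rw [← hms]; exact ins_self m' σ
      rw [← hρ.2, ← h1, show ρ⁻¹ (ρ m') = m' from Equiv.symm_apply_apply ρ m']
    subst hm'
    refine ⟨σ, ?_, hms⟩
    simp only [Finset.mem_filter, Finset.mem_univ, true_and, hms]
    exact hρ.1

-- ==== glue ====

lemma selectProb_le_one (n : ℕ) (Γ : Finset ℕ) (τ : Equiv.Perm (Fin n) → Fin n) :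
    selectProb n Γ τ ≤ 1 := by
  unfold selectProb
  rw [div_le_one (by exact_mod_cast n.factorial_pos)]
  have h : (Finset.univ.filter fun σ : Equiv.Perm (Fin n) => absRank σ (τ σ) ∈ Γ).card
      ≤ n.factorial := by
    calc _ ≤ (Finset.univ : Finset (Equiv.Perm (Fin n))).card := Finset.card_filter_le _ _
    _ = n.factorial := by
        rw [Finset.card_univ, Fintype.card_perm, Fintype.card_fin]
  exact_mod_cast h

lemma bddAbove_pSet_set (n : ℕ) (Γ : Finset ℕ) :
    BddAbove {x : ℝ | ∃ τ : Equiv.Perm (Fin n) → Fin n, IsStoppingRule τ ∧ x = selectProb n Γ τ} := by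
  refine ⟨1, ?_⟩
  rintro x ⟨τ, -, rfl⟩
  exact selectProb_le_one n Γ τ

lemma pRank_succ_le {n k : ℕ} (hn : 0 < n) (hk : k ≤ n) : pRank (n+1) k ≤ pRank n k := by
  unfold pRank pSet
  apply csSup_le
  · exact ⟨selectProb (n+1) {k} (fun _ => 0), ⟨fun _ => 0, fun σ σ' _ => rfl, rfl⟩⟩
  rintro x ⟨τ, hτ, rfl⟩
  classical
  set b : Fin (n+1) → ℕ := fun m =>
    (Finset.univ.filter fun σ : Equiv.Perm (Fin n) =>
      absRank σ (shrink hn τ m σ) ∈ ({k} : Finset ℕ)).card with hb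
  obtain ⟨m₀, -, hmax⟩ := Finset.exists_max_image (Finset.univ : Finset (Fin (n+1))) b
    Finset.univ_nonempty
  have hsplit := count_split n (fun ρ => absRank ρ (τ ρ) ∈ ({k} : Finset ℕ))
  have hab : ∀ m : Fin (n+1),
      (Finset.univ.filter fun σ : Equiv.Perm (Fin n) =>
        absRank (ins m σ) (τ (ins m σ)) ∈ ({k} : Finset ℕ)).card ≤ b m := by
    intro m
    apply Finset.card_le_card
    intro σ hσ
    simp only [Finset.mem_filter, Finset.mem_univ, true_and, Finset.mem_singleton] at hσ ⊢
    exact shrink_success hn hk τ m σ hσ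
  have hS : (Finset.univ.filter fun ρ : Equiv.Perm (Fin (n+1)) =>
      absRank ρ (τ ρ) ∈ ({k} : Finset ℕ)).card ≤ (n+1) * b m₀ := by
    rw [hsplit]
    calc ∑ m : Fin (n+1), (Finset.univ.filter fun σ : Equiv.Perm (Fin n) =>
          absRank (ins m σ) (τ (ins m σ)) ∈ ({k} : Finset ℕ)).card
        ≤ ∑ _m : Fin (n+1), b m₀ :=
          Finset.sum_le_sum fun m _ => (hab m).trans (hmax m (Finset.mem_univ m))
      _ = (n+1) * b m₀ := by simp [mul_comm]
  have hle : selectProb (n+1) {k} τ ≤ selectProb n {k} (shrink hn τ m₀) := by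
    unfold selectProb
    rw [div_le_div_iff₀ (by exact_mod_cast (n+1).factorial_pos)
      (by exact_mod_cast n.factorial_pos)]
    have key : (Finset.univ.filter fun ρ : Equiv.Perm (Fin (n+1)) =>
        absRank ρ (τ ρ) ∈ ({k} : Finset ℕ)).card * n.factorial ≤
        (Finset.univ.filter fun σ : Equiv.Perm (Fin n) =>
          absRank σ (shrink hn τ m₀ σ) ∈ ({k} : Finset ℕ)).card * (n+1).factorial := by
      rw [Nat.factorial_succ]
      calc (Finset.univ.filter fun ρ : Equiv.Perm (Fin (n+1)) =>
            absRank ρ (τ ρ) ∈ ({k} : Finset ℕ)).card * n.factorial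
          ≤ ((n+1) * b m₀) * n.factorial := Nat.mul_le_mul_right _ hS
        _ = b m₀ * ((n+1) * n.factorial) := by ring
    exact_mod_cast key
  exact hle.trans (le_csSup (bddAbove_pSet_set n {k})
    ⟨shrink hn τ m₀, isStoppingRule_shrink hn hτ m₀, rfl⟩)

theorem pRank_symm_and_diagonal (n k : ℕ) (hk1 : 1 ≤ k) (hkn : k ≤ n) :
    pRank n k = pRank n (n - k + 1) ∧ pRank n k ≥ pRank (n + 1) (k + 1) := by
  refine ⟨pRank_rev hk1 hkn, ?_⟩
  have h1 : pRank (n+1) (k+1) = pRank (n+1) (n - k + 1) := by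
    have h := pRank_rev (n := n+1) (k := k+1) (by omega) (by omega)
    rwa [show n + 1 - (k+1) + 1 = n - k + 1 by omega] at h
  have h2 : pRank (n+1) (n-k+1) ≤ pRank n (n-k+1) := pRank_succ_le (by omega) (by omega)
  have h3 : pRank n (n-k+1) = pRank n k := by
    have h := pRank_rev (n := n) (k := n-k+1) (by omega) (by omega)
    rwa [show n - (n-k+1) + 1 = k by omega] at h
  calc pRank (n+1) (k+1) = pRank (n+1) (n - k + 1) := h1
    _ ≤ pRank n (n-k+1) := h2
    _ = pRank n k := h3
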